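/- With the protocol from the previous context: for every k ≥ 0, starting from the configuration C₀ with one agent in state 1, k agents in state a, one agent in state c, no agents in state d, and at least 2^(k+1) agents in state b, there is a reachable configuration C' in which the total count of agents in states c and d equals 2^(k+1). -/

import Mathlib

/-- A configuration of the doubling protocol on states `{1,2,3,4,a,b,c,d}`,
recorded as counts of agents in each state. -/
structure Conf where
  n1 : ℕ
  n2 : ℕ
  n3 : ℕ
  n4 : ℕ
  a : ℕ
  b : ℕ
  c : ℕ
  d : ℕ

/-- One step of the protocol with transitions
`1c→2d, 2b→1d, 1a→3b, 3d→4c, 4b→3c, 3a→1b` (all other interactions are no-ops,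
which do not change the count vector). -/
def DStep (C C' : Conf) : Prop :=
  (1 ≤ C.n1 ∧ 1 ≤ C.c ∧ C' = ⟨C.n1 - 1, C.n2 + 1, C.n3, C.n4, C.a, C.b, C.c - 1, C.d + 1⟩) ∨
  (1 ≤ C.n2 ∧ 1 ≤ C.b ∧ C' = ⟨C.n1 + 1, C.n2 - 1, C.n3, C.n4, C.a, C.b - 1, C.c, C.d + 1⟩) ∨
  (1 ≤ C.n1 ∧ 1 ≤ C.a ∧ C' = ⟨C.n1 - 1, C.n2, C.n3 + 1, C.n4, C.a - 1, C.b + 1, C.c, C.d⟩) ∨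
  (1 ≤ C.n3 ∧ 1 ≤ C.d ∧ C' = ⟨C.n1, C.n2, C.n3 - 1, C.n4 + 1, C.a, C.b, C.c + 1, C.d - 1⟩) ∨
  (1 ≤ C.n4 ∧ 1 ≤ C.b ∧ C' = ⟨C.n1, C.n2, C.n3 + 1, C.n4 - 1, C.a, C.b - 1, C.c + 1, C.d⟩) ∨
  (1 ≤ C.n3 ∧ 1 ≤ C.a ∧ C' = ⟨C.n1 + 1, C.n2, C.n3 - 1, C.n4, C.a - 1, C.b + 1, C.c, C.d⟩)

/-- `C` has exactly one agent in a numbered state. -/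
def OneNumbered (C : Conf) : Prop :=
  C.n1 + C.n2 + C.n3 + C.n4 = 1

/-- The potential function `f` (meaningful when `C` has exactly one numbered agent). -/
def fPot (C : Conf) : ℕ :=
  if C.n1 = 1 then 2 ^ C.a * (2 * C.c + C.d)
  else if C.n2 = 1 then 2 ^ C.a * (2 * C.c + C.d + 1)
  else if C.n3 = 1 then 2 ^ C.a * (2 * C.d + C.c)
  else 2 ^ C.a * (2 * C.d + C.c + 1)

/-- Swap symmetry exchanging states `1↔3`, `2↔4`, `c↔d`. -/
def sw (C : Conf) : Conf := ⟨C.n3, C.n4, C.n1, C.n2, C.a, C.b, C.d, C.c⟩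

lemma DStep_sw {C C' : Conf} (h : DStep C C') : DStep (sw C) (sw C') := by
  rcases h with ⟨h1,h2,he⟩|⟨h1,h2,he⟩|⟨h1,h2,he⟩|⟨h1,h2,he⟩|⟨h1,h2,he⟩|⟨h1,h2,he⟩ <;> subst he
  · exact Or.inr (Or.inr (Or.inr (Or.inl ⟨h1, h2, rfl⟩)))
  · exact Or.inr (Or.inr (Or.inr (Or.inr (Or.inl ⟨h1, h2, rfl⟩))))
  · exact Or.inr (Or.inr (Or.inr (Or.inr (Or.inr ⟨h1, h2, rfl⟩))))
  · exact Or.inl ⟨h1, h2, rfl⟩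
  · exact Or.inr (Or.inl ⟨h1, h2, rfl⟩)
  · exact Or.inr (Or.inr (Or.inl ⟨h1, h2, rfl⟩))

lemma rtg_sw {C C' : Conf} (h : Relation.ReflTransGen DStep C C') :
    Relation.ReflTransGen DStep (sw C) (sw C') :=
  Relation.ReflTransGen.lift sw (fun _ _ hs => DStep_sw hs) _ _ h

lemma phase1 (n : ℕ) : ∀ a b c d : ℕ,
    Relation.ReflTransGen DStep ⟨1,0,0,0,a,b+n,c+n,d⟩ ⟨1,0,0,0,a,b,c,d+2*n⟩ := by
  induction n with
  | zero =>
    intro a b c d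
    simp only [Nat.add_zero, Nat.mul_zero]
    exact Relation.ReflTransGen.refl
  | succ n ih =>
    intro a b c d
    have s1 : DStep ⟨1,0,0,0,a,b+(n+1),c+(n+1),d⟩ ⟨0,1,0,0,a,b+(n+1),c+n,d+1⟩ :=
      Or.inl ⟨Nat.le_refl 1, by show 1 ≤ c+(n+1); omega, rfl⟩
    have s2 : DStep ⟨0,1,0,0,a,b+(n+1),c+n,d+1⟩ ⟨1,0,0,0,a,b+n,c+n,d+2⟩ :=
      Or.inr (Or.inl ⟨Nat.le_refl 1, by show 1 ≤ b+(n+1); omega, rfl⟩)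
    have key := ih a b c (d+2)
    rw [show d+2+2*n = d+2*(n+1) by ring] at key
    exact Relation.ReflTransGen.head s1 (Relation.ReflTransGen.head s2 key)

lemma main : ∀ k m b : ℕ, m * (2^(k+1) - 1) ≤ b →
    ∃ C' : Conf, Relation.ReflTransGen DStep ⟨1,0,0,0,k,b,m,0⟩ C' ∧
      C'.c + C'.d = 2^(k+1) * m := by
  intro k
  induction k with
  | zero =>
    intro m b hb
    have hbm : m ≤ b := by simpa using hb
    refine ⟨⟨1,0,0,0,0,b-m,0,0+2*m⟩, ?_, by show 0 + (0 + 2*m) = 2^1 * m; ring⟩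
    have p1 := phase1 m 0 (b-m) 0 0
    rw [show b - m + m = b by omega] at p1
    simpa using p1
  | succ k ih =>
    intro m b hb
    have h2 : (2:ℕ) ≤ 2^(k+1+1) := by
      calc (2:ℕ) = 2^1 := rfl
        _ ≤ 2^(k+1+1) := Nat.pow_le_pow_right (by norm_num) (by omega)
    have hmm : m ≤ m * (2^(k+1+1)-1) := Nat.le_mul_of_pos_right m (by omega)
    have hbm : m ≤ b := le_trans hmm hb
    -- phase 1 in state 1
    have p1 := phase1 m (k+1) (b-m) 0 0
    rw [show b - m + m = b by omega] at p1
    simp only [Nat.zero_add] at p1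
    -- move to state 3
    have s3 : DStep ⟨1,0,0,0,k+1,b-m,0,2*m⟩ ⟨0,0,1,0,k,b-m+1,0,2*m⟩ :=
      Or.inr (Or.inr (Or.inl ⟨Nat.le_refl 1, by show 1 ≤ k+1; omega, rfl⟩))
    -- budget for the mirrored induction hypothesis
    have h1p : (1:ℕ) ≤ 2^(k+1) := Nat.one_le_two_pow
    obtain ⟨t, ht⟩ := Nat.exists_eq_add_of_le h1p
    have hb2 : 2*m * (2^(k+1) - 1) ≤ b - m + 1 := by
      rw [pow_succ, ht] at hb
      rw [ht]
      have he : (1+t)*2 - 1 = 2*t+1 := by omega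
      rw [he] at hb
      have hb' : 2*(m*t) + m ≤ b := by
        have : m*(2*t+1) = 2*(m*t) + m := by ring
        omega
      calc 2*m*((1+t)-1) = 2*(m*t) := by
            rw [show (1+t)-1 = t by omega]; ring
        _ ≤ b - m + 1 := by omega
    obtain ⟨C', hC', hcd⟩ := ih (2*m) (b-m+1) hb2
    refine ⟨sw C', ?_, ?_⟩
    · have run3 := rtg_sw hC'
      have hsw : sw ⟨1,0,0,0,k,b-m+1,2*m,0⟩ = ⟨0,0,1,0,k,b-m+1,0,2*m⟩ := rfl
      rw [hsw] at run3
      exact p1.trans (Relation.ReflTransGen.head s3 run3)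
    · show C'.d + C'.c = 2^(k+1+1) * m
      calc C'.d + C'.c = 2^(k+1) * (2*m) := by omega
        _ = 2^(k+1+1) * m := by rw [pow_succ]; ring

/-- From the configuration with one agent in state 1, `k` agents in state `a`, one in
state `c`, none in `d`, and at least `2^(k+1)` agents in state `b`, some reachable
configuration has exactly `2^(k+1)` agents in states `c` and `d` combined. -/
theorem reach_pow (k B : ℕ) (hB : 2 ^ (k + 1) ≤ B) :
    ∃ C' : Conf,
      Relation.ReflTransGen DStep ⟨1, 0, 0, 0, k, B, 1, 0⟩ C' ∧
      C'.c + C'.d = 2 ^ (k + 1) := by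
  obtain ⟨C', h1, h2⟩ := main k 1 B (by omega)
  exact ⟨C', h1, by simpa using h2⟩
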